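/- Let X be a compact Hausdorff space with a continuous involution σ : X → X (conjugation). Let Z₀(X)_ℝ be the subgroup of the topological group Z₀(X) of zero-cycles fixed by the induced involution, and let Z₀(X)^av = {c + σ(c) : c ∈ Z₀(X)}. Then Z₀(X)_ℝ and Z₀(X)^av are closed subgroups of Z₀(X). -/

import Mathlib

open scoped BigOperators

/-- The group of zero-cycles on `X`, modeled by finitely supported functions `X →₀ ℤ`,
with the weak (colimit) topology of the filtration by the images of
`SP^n(X) × SP^n(X) → Z₀(X)`, `(a, b) ↦ a - b`. -/
noncomputable def cycleTopology (X : Type*) [TopologicalSpace X] : TopologicalSpace (X →₀ ℤ) :=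
  ⨆ n : ℕ, TopologicalSpace.coinduced
    (fun p : (Fin n → X) × (Fin n → X) =>
      (∑ i, Finsupp.single (p.1 i) 1) - ∑ i, Finsupp.single (p.2 i) (1 : ℤ))
    inferInstance

section ZeroCycleAux

variable {X : Type*}

/-- The cycle associated to a tuple. -/
noncomputable def zcyc {m : ℕ} (u : Fin m → X) : X →₀ ℤ := ∑ i, Finsupp.single (u i) 1

/-- The `ℕ`-valued cycle associated to a tuple. -/
noncomputable def zcycN {m : ℕ} (u : Fin m → X) : X →₀ ℕ := ∑ i, Finsupp.single (u i) 1

/-- Coefficientwise cast `ℕ → ℤ` of finitely supported functions. -/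
noncomputable def zcast : (X →₀ ℕ) →+ (X →₀ ℤ) :=
  Finsupp.mapRange.addMonoidHom (Nat.castAddMonoidHom ℤ)

/-- Total mass of a zero-cycle. -/
noncomputable def zmass : (X →₀ ℤ) →+ ℤ := Finsupp.liftAddHom fun _ => AddMonoidHom.id ℤ

@[simp] lemma zcast_apply (f : X →₀ ℕ) (x : X) : zcast f x = (f x : ℤ) := by
  simp [zcast, Finsupp.mapRange.addMonoidHom, Finsupp.mapRange_apply]
  rfl

lemma zcast_injective : Function.Injective (zcast (X := X)) :=
  Finsupp.mapRange_injective _ (by simp) Nat.cast_injective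

lemma zcyc_eq_zcast {m : ℕ} (u : Fin m → X) : zcyc u = zcast (zcycN u) := by
  rw [zcyc, zcycN, map_sum]
  simp [zcast, Finsupp.mapRange.addMonoidHom, Finsupp.mapRange_single]
  exact Finset.sum_congr rfl fun i _ => Finsupp.ext fun y => by
    erw [Finsupp.mapRange_apply]; by_cases h : u i = y <;> simp [Finsupp.single_apply, h]

lemma toMultiset_zcycN {m : ℕ} (u : Fin m → X) :
    Finsupp.toMultiset (zcycN u) = ↑(List.ofFn u) := by
  induction m with
  | zero => simp [zcycN]
  | succ n ih =>
    rw [zcycN, Fin.sum_univ_succ, map_add, Finsupp.toMultiset_single, ← zcycN, ih,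
      List.ofFn_succ]
    simp [Multiset.cons_coe]

lemma exists_perm_of_coe_eq : ∀ {m : ℕ} (u v : Fin m → X),
    (↑(List.ofFn u) : Multiset X) = ↑(List.ofFn v) → ∃ π : Equiv.Perm (Fin m), u ∘ π = v := by
  intro m
  induction m with
  | zero => exact fun u v _ => ⟨1, funext fun i => i.elim0⟩
  | succ n ih =>
    intro u v h
    have hv0 : v 0 ∈ List.ofFn u := by
      have : v 0 ∈ (↑(List.ofFn v) : Multiset X) := by
        rw [Multiset.mem_coe, List.mem_ofFn]; exact ⟨0, rfl⟩
      rw [← h, Multiset.mem_coe] at this; exact this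
    obtain ⟨j, hj⟩ := List.mem_ofFn.1 hv0
    set τ : Equiv.Perm (Fin (n + 1)) := Equiv.swap 0 j with hτ
    set u' : Fin (n + 1) → X := u ∘ τ with hu'
    have hu'0 : u' 0 = v 0 := by simp [hu', hτ, Equiv.swap_apply_left, hj]
    have hcoe : (↑(List.ofFn u') : Multiset X) = ↑(List.ofFn v) := by
      rw [← h, Multiset.coe_eq_coe]
      exact Equiv.Perm.ofFn_comp_perm τ u
    rw [List.ofFn_succ, List.ofFn_succ (f := v), ← Multiset.cons_coe, ← Multiset.cons_coe,
      hu'0, Multiset.cons_inj_right] at hcoe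
    obtain ⟨π', hπ'⟩ := ih _ _ hcoe
    refine ⟨Equiv.trans ⟨Fin.cases 0 (fun i => (π' i).succ),
      Fin.cases 0 (fun i => (π'.symm i).succ), ?_, ?_⟩ τ, funext fun i => ?_⟩
    · intro x
      refine Fin.cases ?_ (fun i => ?_) x <;> simp
    · intro x
      refine Fin.cases ?_ (fun i => ?_) x <;> simp
    · refine Fin.cases ?_ (fun i => ?_) i
      · simpa [hτ, hj] using hu'0.symm ▸ rfl
      · have := congrFun hπ' i
        simpa [hu'] using this

lemma zcyc_eq_iff {m : ℕ} (u v : Fin m → X) :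
    zcyc u = zcyc v ↔ ∃ π : Equiv.Perm (Fin m), u ∘ π = v := by
  classical
  constructor
  · intro h
    rw [zcyc_eq_zcast, zcyc_eq_zcast] at h
    have h2 := zcast_injective h
    have h3 : Finsupp.toMultiset (zcycN u) = Finsupp.toMultiset (zcycN v) := by rw [h2]
    rw [toMultiset_zcycN, toMultiset_zcycN] at h3
    exact exists_perm_of_coe_eq u v h3
  · rintro ⟨π, rfl⟩
    rw [zcyc, zcyc]
    exact (Equiv.sum_comp π fun i => Finsupp.single (u i) (1 : ℤ)).symm

lemma isClosed_zcyc_eq {Y : Type*} [TopologicalSpace Y] [TopologicalSpace X] [T2Space X]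
    {m : ℕ} {U V : Y → Fin m → X} (hU : Continuous U) (hV : Continuous V) :
    IsClosed {y | zcyc (U y) = zcyc (V y)} := by
  have : {y | zcyc (U y) = zcyc (V y)} =
      ⋃ π : Equiv.Perm (Fin m), ⋂ i, {y | U y (π i) = V y i} := by
    ext y
    simp only [Set.mem_setOf_eq, Set.mem_iUnion, Set.mem_iInter, zcyc_eq_iff, funext_iff,
      Function.comp_apply]
  rw [this]
  exact isClosed_iUnion_of_finite fun π => isClosed_iInter fun i =>
    isClosed_eq ((continuous_apply _).comp hU) ((continuous_apply _).comp hV)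

lemma zcyc_append {m n : ℕ} (u : Fin m → X) (v : Fin n → X) :
    zcyc (Fin.append u v) = zcyc u + zcyc v := by
  rw [zcyc, Fin.sum_univ_add]
  simp [zcyc]

lemma mapDomain_zcyc (σ : X → X) {m : ℕ} (u : Fin m → X) :
    Finsupp.mapDomain σ (zcyc u) = zcyc (σ ∘ u) := by
  rw [zcyc, Finsupp.mapDomain_finset_sum]
  simp [zcyc, Finsupp.mapDomain_single]

lemma mapDomain_sub' (σ : X → X) (a b : X →₀ ℤ) :
    Finsupp.mapDomain σ (a - b) = Finsupp.mapDomain σ a - Finsupp.mapDomain σ b :=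
  map_sub (Finsupp.mapDomain.addMonoidHom σ) a b

@[simp] lemma zmass_single (x : X) (v : ℤ) : zmass (Finsupp.single x v) = v :=
  Finsupp.liftAddHom_apply_single _ _ _

lemma zmass_zcyc {m : ℕ} (u : Fin m → X) : zmass (zcyc u) = m := by
  rw [zcyc, map_sum]
  simp

lemma zmass_mapDomain (σ : X → X) (a : X →₀ ℤ) :
    zmass (Finsupp.mapDomain σ a) = zmass a := by
  have : (zmass (X := X)).comp (Finsupp.mapDomain.addMonoidHom σ) = zmass := by
    apply Finsupp.addHom_ext
    intro x v
    simp [Finsupp.mapDomain.addMonoidHom_apply, Finsupp.mapDomain_single]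
  exact DFunLike.congr_fun this a

lemma zcyc_nonneg {m : ℕ} (u : Fin m → X) (x : X) : 0 ≤ zcyc u x := by
  classical
  rw [zcyc, Finsupp.finset_sum_apply]
  refine Finset.sum_nonneg fun i _ => ?_
  rw [Finsupp.single_apply]
  split <;> simp

lemma zmass_apply (f : X →₀ ℤ) : zmass f = f.sum fun _ v => v := by
  simp [zmass, Finsupp.liftAddHom_apply]
  rfl

lemma zmass_nonneg {f : X →₀ ℤ} (h : ∀ x, 0 ≤ f x) : 0 ≤ zmass f := by
  rw [zmass_apply]
  exact Finset.sum_nonneg fun x _ => h x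

lemma zmass_mono {f g : X →₀ ℤ} (h : ∀ x, f x ≤ g x) : zmass f ≤ zmass g := by
  have := zmass_nonneg (f := g - f) (fun x => by simp [Finsupp.sub_apply]; linarith [h x])
  rw [map_sub] at this
  linarith

lemma zmass_zcast_eq_card (f : X →₀ ℕ) :
    zmass (zcast f) = (Multiset.card (Finsupp.toMultiset f) : ℤ) := by
  induction f using Finsupp.induction with
  | zero => simp
  | single_add x v f _ _ ih =>
    rw [map_add, map_add, map_add, Multiset.card_add, ih]
    have hz : zcast (Finsupp.single x v) = Finsupp.single x (v : ℤ) := Finsupp.ext fun y => by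
      rw [zcast_apply]; by_cases h : x = y <;> simp [Finsupp.single_apply, h]
    rw [hz]
    simp [zmass, Finsupp.liftAddHom_apply_single, zcast,
      Finsupp.mapRange.addMonoidHom, Finsupp.mapRange_single]

lemma exists_tuple_of_card (s : Multiset X) (n : ℕ) (h : Multiset.card s = n) :
    ∃ t : Fin n → X, (↑(List.ofFn t) : Multiset X) = s := by
  have hl : s.toList.length = n := by rw [Multiset.length_toList, h]
  subst hl
  exact ⟨s.toList.get, by rw [List.ofFn_get, Multiset.coe_toList]⟩

lemma exists_witness {n : ℕ} (σ : X → X) (hσ : σ ∘ σ = id)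
    (p : (Fin n → X) × (Fin n → X)) (a : X →₀ ℤ)
    (h : zcyc p.1 - zcyc p.2 = a + Finsupp.mapDomain σ a) :
    ∃ q : (Fin n → X) × (Fin n → X),
      zcyc p.1 - zcyc p.2 =
        (zcyc q.1 - zcyc q.2) + Finsupp.mapDomain σ (zcyc q.1 - zcyc q.2) := by
  classical
  have hσx : ∀ x, σ (σ x) = x := congrFun hσ
  obtain _ | n' := n
  · refine ⟨(Fin.elim0, Fin.elim0), ?_⟩
    simp [zcyc]
  letI : LinearOrder X := linearOrderOfSTO WellOrderingRel
  set A := zcyc p.1 with hA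
  set B := zcyc p.2 with hB
  set c := A - B with hcdef
  have hmap : ∀ (l : X →₀ ℤ) x, Finsupp.mapDomain σ l x = l (σ x) := by
    intro l x
    have e : X ≃ X := ⟨σ, σ, hσx, hσx⟩
    exact Finsupp.mapDomain_equiv_apply (f := ⟨σ, σ, hσx, hσx⟩) l x
  have hc : ∀ x, c (σ x) = c x := by
    intro x
    rw [h, Finsupp.add_apply, Finsupp.add_apply, hmap, hmap, hσx, add_comm]
  have heven : ∀ x, σ x = x → c x = 2 * a x := by
    intro x hx
    rw [h, Finsupp.add_apply, hmap, hx, two_mul]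
  set d : X →₀ ℤ := Finsupp.onFinset c.support
      (fun x => if σ x = x then a x else if x < σ x then c x else 0)
      (fun x hx => by
        rw [Finsupp.mem_support_iff]
        intro hcx
        apply hx
        split_ifs with h1 h2
        · have := heven x h1
          rw [hcx] at this
          linarith
        · exact hcx
        · rfl) with hddef
  have hdapp : ∀ x, d x = if σ x = x then a x else if x < σ x then c x else 0 :=
    fun x => rfl
  have hdc : d + Finsupp.mapDomain σ d = c := by
    ext x
    rw [Finsupp.add_apply, hmap]
    by_cases hx : σ x = x
    · rw [hdapp, hdapp, if_pos hx, hx, if_pos hx, ← two_mul, ← heven x hx]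
    · have hx2 : ¬ σ (σ x) = σ x := by
        rw [hσx x]; exact fun hh => hx hh.symm
      rcases lt_trichotomy x (σ x) with hlt | heq | hgt
      · rw [hdapp, hdapp, if_neg hx, if_pos hlt, if_neg hx2]
        rw [if_neg (by rw [hσx x]; exact not_lt.2 hlt.le), add_zero]
      · exact absurd heq.symm hx
      · rw [hdapp, hdapp, if_neg hx, if_neg (not_lt.2 hgt.le), if_neg hx2]
        rw [if_pos (by rw [hσx x]; exact hgt), hc x, zero_add]
  have hAx : ∀ x, 0 ≤ A x := fun x => zcyc_nonneg _ x
  have hBx : ∀ x, 0 ≤ B x := fun x => zcyc_nonneg _ x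
  have hcA : ∀ x, c x ≤ A x := fun x => by
    have := hBx x
    rw [hcdef, Finsupp.sub_apply]
    linarith
  have hcB : ∀ x, -c x ≤ B x := fun x => by
    have := hAx x
    rw [hcdef, Finsupp.sub_apply]
    linarith
  have hdA : ∀ x, ((d x).toNat : ℤ) ≤ A x := by
    intro x
    rw [Int.toNat_eq_max, max_le_iff]
    refine ⟨?_, hAx x⟩
    rw [hdapp]
    split_ifs with h1 h2
    · rcases le_or_gt (a x) 0 with h3 | h3
      · linarith [hAx x]
      · have := heven x h1
        have := hcA x
        linarith
    · exact hcA x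
    · exact hAx x
  have hdB : ∀ x, (((-d) x).toNat : ℤ) ≤ B x := by
    intro x
    rw [Finsupp.neg_apply, Int.toNat_eq_max, max_le_iff]
    refine ⟨?_, hBx x⟩
    rw [hdapp]
    split_ifs with h1 h2
    · rcases le_or_gt (a x) 0 with h3 | h3
      · have := heven x h1
        have := hcB x
        linarith
      · linarith [hBx x]
    · exact hcB x
    · simpa using hBx x
  set Dn : X →₀ ℕ := Finsupp.mapRange Int.toNat Int.toNat_zero d with hDn
  set D'n : X →₀ ℕ := Finsupp.mapRange Int.toNat Int.toNat_zero (-d) with hD'n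
  have hDd : zcast Dn - zcast D'n = d := by
    ext x
    rw [Finsupp.sub_apply, zcast_apply, zcast_apply, hDn, hD'n,
      Finsupp.mapRange_apply, Finsupp.mapRange_apply, Finsupp.neg_apply]
    exact Int.toNat_sub_toNat_neg (d x)
  set k := Multiset.card (Finsupp.toMultiset Dn) with hk
  set k' := Multiset.card (Finsupp.toMultiset D'n) with hk'
  have hmassd : zmass d = 0 := by
    have h1 : zmass c = 0 := by
      simp only [hcdef, hA, hB, map_sub, zmass_zcyc, sub_self]
    have h2 := congrArg zmass hdc
    rw [map_add, zmass_mapDomain, h1] at h2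
    linarith
  have hkk' : k = k' := by
    have h2 := congrArg zmass hDd
    rw [map_sub, zmass_zcast_eq_card, zmass_zcast_eq_card, ← hk, ← hk', hmassd] at h2
    have : (k : ℤ) = k' := by linarith
    exact_mod_cast this
  have hkn : k ≤ n' + 1 := by
    have h1 : zmass (zcast Dn) ≤ zmass A := by
      apply zmass_mono
      intro x
      rw [zcast_apply, hDn, Finsupp.mapRange_apply]
      exact hdA x
    rw [zmass_zcast_eq_card, ← hk, hA, zmass_zcyc] at h1
    exact_mod_cast h1
  set y := p.1 0 with hy
  obtain ⟨t₁, ht₁⟩ := exists_tuple_of_card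
    (Finsupp.toMultiset Dn + Multiset.replicate (n' + 1 - k) y) (n' + 1)
    (by rw [Multiset.card_add, Multiset.card_replicate, ← hk]; omega)
  obtain ⟨t₂, ht₂⟩ := exists_tuple_of_card
    (Finsupp.toMultiset D'n + Multiset.replicate (n' + 1 - k) y) (n' + 1)
    (by rw [Multiset.card_add, Multiset.card_replicate, ← hk', ← hkk']; omega)
  have htoM_inj : Function.Injective (Finsupp.toMultiset (α := X)) := by
    intro f g hfg
    have := congrArg Multiset.toFinsupp hfg
    rwa [Finsupp.toMultiset_toFinsupp, Finsupp.toMultiset_toFinsupp] at this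
  have h1 : zcycN t₁ = Dn + Finsupp.single y (n' + 1 - k) := by
    apply htoM_inj
    rw [toMultiset_zcycN, ht₁, map_add, Finsupp.toMultiset_single,
      Multiset.nsmul_singleton]
  have h2 : zcycN t₂ = D'n + Finsupp.single y (n' + 1 - k) := by
    apply htoM_inj
    rw [toMultiset_zcycN, ht₂, map_add, Finsupp.toMultiset_single,
      Multiset.nsmul_singleton]
  have hq : zcyc t₁ - zcyc t₂ = d := by
    rw [zcyc_eq_zcast, zcyc_eq_zcast, h1, h2, map_add, map_add, ← hDd]
    abel
  exact ⟨(t₁, t₂), by rw [hq, ← hdc]⟩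

end ZeroCycleAux

/-- Let `X` be a compact Hausdorff space with a continuous involution `σ` (conjugation).
Then the subgroup `Z₀(X)_ℝ` of zero-cycles fixed by the induced involution and the
subgroup `Z₀(X)^av = {c + σ c}` of averaged cycles are closed subgroups of the topological
group `Z₀(X)` of zero-cycles. -/
theorem real_and_averaged_zeroCycles_isClosed
    {X : Type*} [TopologicalSpace X] [CompactSpace X] [T2Space X]
    (σ : X → X) (hσc : Continuous σ) (hσ : σ ∘ σ = id) :
    @IsClosed _ (cycleTopology X) {c : X →₀ ℤ | Finsupp.mapDomain σ c = c} ∧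
      @IsClosed _ (cycleTopology X)
        (Set.range fun a : X →₀ ℤ => a + Finsupp.mapDomain σ a) := by
  classical
  constructor
  · rw [cycleTopology, isClosed_iSup_iff]
    intro n
    rw [isClosed_coinduced]
    have hpre : (fun p : (Fin n → X) × (Fin n → X) =>
          (∑ i, Finsupp.single (p.1 i) 1) - ∑ i, Finsupp.single (p.2 i) (1 : ℤ)) ⁻¹'
          {c : X →₀ ℤ | Finsupp.mapDomain σ c = c} =
        {p : (Fin n → X) × (Fin n → X) |
          zcyc (Fin.append p.1 (σ ∘ p.2)) = zcyc (Fin.append (σ ∘ p.1) p.2)} := by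
      ext p
      show Finsupp.mapDomain σ (zcyc p.1 - zcyc p.2) = zcyc p.1 - zcyc p.2 ↔ _
      rw [Set.mem_setOf_eq, mapDomain_sub', mapDomain_zcyc, mapDomain_zcyc, zcyc_append,
        zcyc_append, sub_eq_sub_iff_add_eq_add]
      exact eq_comm
    rw [hpre]
    apply isClosed_zcyc_eq
    · apply continuous_pi
      intro i
      refine Fin.addCases (fun j => ?_) (fun j => ?_) i
      · simp only [Fin.append_left]
        exact (continuous_apply j).comp continuous_fst
      · simp only [Fin.append_right, Function.comp_apply]
        exact hσc.comp ((continuous_apply j).comp continuous_snd)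
    · apply continuous_pi
      intro i
      refine Fin.addCases (fun j => ?_) (fun j => ?_) i
      · simp only [Fin.append_left, Function.comp_apply]
        exact hσc.comp ((continuous_apply j).comp continuous_fst)
      · simp only [Fin.append_right]
        exact (continuous_apply j).comp continuous_snd
  · rw [cycleTopology, isClosed_iSup_iff]
    intro n
    rw [isClosed_coinduced]
    set P := (Fin n → X) × (Fin n → X) with hP
    set W1 : P × P → Fin (n + n + n) → X :=
      fun pq => Fin.append (Fin.append pq.1.1 pq.2.2) (σ ∘ pq.2.2) with hW1
    set W2 : P × P → Fin (n + n + n) → X :=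
      fun pq => Fin.append (Fin.append pq.1.2 pq.2.1) (σ ∘ pq.2.1) with hW2
    have hpre : (fun p : P =>
          (∑ i, Finsupp.single (p.1 i) 1) - ∑ i, Finsupp.single (p.2 i) (1 : ℤ)) ⁻¹'
          (Set.range fun a : X →₀ ℤ => a + Finsupp.mapDomain σ a) =
        Prod.fst '' {pq : P × P | zcyc (W1 pq) = zcyc (W2 pq)} := by
      ext p
      constructor
      · rintro ⟨a, ha⟩
        obtain ⟨q, hq⟩ := exists_witness σ hσ p a
          (by
            show zcyc p.1 - zcyc p.2 = _
            exact ha.symm)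
        refine ⟨(p, q), ?_, rfl⟩
        show zcyc (W1 (p, q)) = zcyc (W2 (p, q))
        rw [hW1, hW2]
        simp only [zcyc_append]
        rw [mapDomain_sub', mapDomain_zcyc, mapDomain_zcyc] at hq
        have : zcyc p.1 - zcyc p.2 =
            (zcyc q.1 - zcyc q.2) + (zcyc (σ ∘ q.1) - zcyc (σ ∘ q.2)) := hq
        calc zcyc p.1 + zcyc q.2 + zcyc (σ ∘ q.2)
            = (zcyc p.1 - zcyc p.2) + zcyc p.2 + zcyc q.2 + zcyc (σ ∘ q.2) := by abel
          _ = ((zcyc q.1 - zcyc q.2) + (zcyc (σ ∘ q.1) - zcyc (σ ∘ q.2)))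
              + zcyc p.2 + zcyc q.2 + zcyc (σ ∘ q.2) := by rw [this]
          _ = zcyc p.2 + zcyc q.1 + zcyc (σ ∘ q.1) := by abel
      · rintro ⟨⟨p₁, q⟩, hE, rfl⟩
        have hE' : zcyc p₁.1 + zcyc q.2 + zcyc (σ ∘ q.2) =
            zcyc p₁.2 + zcyc q.1 + zcyc (σ ∘ q.1) := by
          have := hE
          rw [hW1, hW2] at this
          simpa only [Set.mem_setOf_eq, zcyc_append] using this
        refine ⟨zcyc q.1 - zcyc q.2, ?_⟩
        show (zcyc q.1 - zcyc q.2) + Finsupp.mapDomain σ (zcyc q.1 - zcyc q.2) =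
          zcyc p₁.1 - zcyc p₁.2
        rw [mapDomain_sub', mapDomain_zcyc, mapDomain_zcyc]
        calc (zcyc q.1 - zcyc q.2) + (zcyc (σ ∘ q.1) - zcyc (σ ∘ q.2))
            = (zcyc p₁.2 + zcyc q.1 + zcyc (σ ∘ q.1))
              - (zcyc p₁.2 + zcyc q.2 + zcyc (σ ∘ q.2)) := by abel
          _ = (zcyc p₁.1 + zcyc q.2 + zcyc (σ ∘ q.2))
              - (zcyc p₁.2 + zcyc q.2 + zcyc (σ ∘ q.2)) := by rw [hE']
          _ = zcyc p₁.1 - zcyc p₁.2 := by abel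
    rw [hpre]
    apply isClosedMap_fst_of_compactSpace
    have hcont : ∀ (f : P × P → Fin n → X), Continuous f → ∀ (g : P × P → Fin n → X),
        Continuous g → Continuous fun pq => Fin.append (Fin.append (f pq) (g pq)) (σ ∘ g pq) := by
      intro f hf g hg
      apply continuous_pi
      intro i
      refine Fin.addCases (fun j => ?_) (fun j => ?_) i
      · refine Fin.addCases (fun j' => ?_) (fun j' => ?_) j
        · simp only [Fin.append_left]
          exact (continuous_apply j').comp hf
        · simp only [Fin.append_left, Fin.append_right]
          exact (continuous_apply j').comp hg
      · simp only [Fin.append_right, Function.comp_apply]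
        exact hσc.comp ((continuous_apply j).comp hg)
    exact isClosed_zcyc_eq
      (hcont _ (continuous_fst.fst) _ (continuous_snd.snd))
      (hcont _ (continuous_fst.snd) _ (continuous_snd.fst))
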